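/- arXiv:2601.03008 — 9 statements merged into one kernel-verified Lean document; each statement's English description precedes it below -/
import Mathlib

section
/- Let X be a real symmetric positive semidefinite p×p matrix. Then rank(X) ≤ 1 if and only if trace(X) equals the largest eigenvalue of X. (For positive semidefinite X, the trace equals the nuclear norm ‖X‖_* and the largest eigenvalue equals the spectral norm ‖X‖, so this states that the DC constraint ‖X‖_* − ‖X‖ = 0 characterizes the rank-one constraint on the positive semidefinite cone.) -/
open Matrix

/-- For a real symmetric positive semidefinite matrix `X`, one has
`rank(X) ≤ 1` if and only if `trace(X)` equals the largest eigenvalue of `X`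
(i.e. the DC constraint `‖X‖_* − ‖X‖ = 0` characterizes the rank-one constraint on the
PSD cone, since for PSD matrices the trace is the nuclear norm and the largest
eigenvalue is the spectral norm). -/
theorem rank_le_one_iff_trace_eq_top_eigenvalue (p : ℕ) (hp : 0 < p)
    (X : Matrix (Fin p) (Fin p) ℝ) (hX : X.PosSemidef) :
    X.rank ≤ 1 ↔ X.trace = ⨆ i, hX.1.eigenvalues i := by
  have : Nonempty (Fin p) := ⟨⟨0, hp⟩⟩
  set f := hX.1.eigenvalues with hf
  have hnonneg : ∀ i, 0 ≤ f i := fun i => hX.eigenvalues_nonneg i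
  -- trace equals sum of eigenvalues
  have htr : X.trace = ∑ i, f i := by
    conv_lhs => rw [hX.1.spectral_theorem]
    rw [Unitary.conjStarAlgAut_apply, Matrix.trace_mul_cycle, Unitary.coe_star_mul_self, Matrix.one_mul, Matrix.trace_diagonal]
    simp [hf]
  -- argmax
  obtain ⟨j, hj⟩ : ∃ j, ∀ i, f i ≤ f j := Finite.exists_max f
  have hsup : (⨆ i, f i) = f j :=
    le_antisymm (ciSup_le hj) (le_ciSup (Set.Finite.bddAbove (Set.finite_range f)) j)
  have hrank := hX.1.rank_eq_card_non_zero_eigs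
  constructor
  · intro hr
    rw [hrank] at hr
    rw [htr, hsup]
    by_cases hall : ∀ i, f i = 0
    · simp [hall]
    · push_neg at hall
      obtain ⟨k, hk⟩ := hall
      have hzero : ∀ i, i ≠ k → f i = 0 := by
        intro i hi
        by_contra hi0
        have h2 : ({⟨i, hi0⟩, ⟨k, hk⟩} : Finset {i // f i ≠ 0}).card ≤ 1 :=
          le_trans (Finset.card_le_univ _) (by simpa using hr)
        rw [Finset.card_insert_of_notMem (by simp [Subtype.ext_iff, hi]),
          Finset.card_singleton] at h2
        omega
      have hjk : j = k := by
        by_contra hjk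
        have h1 := hzero j hjk
        have h2 := lt_of_lt_of_le (lt_of_le_of_ne (hnonneg k) (Ne.symm hk)) (hj k)
        linarith
      rw [hjk]
      exact Finset.sum_eq_single_of_mem k (Finset.mem_univ k) (fun i _ hi => hzero i hi)
  · intro htreq
    rw [htr, hsup] at htreq
    have hsum0 : ∑ i ∈ Finset.univ.erase j, f i = 0 := by
      have := Finset.add_sum_erase Finset.univ f (Finset.mem_univ j)
      linarith
    have hzero : ∀ i, i ≠ j → f i = 0 := by
      intro i hi
      exact (Finset.sum_eq_zero_iff_of_nonneg (fun i _ => hnonneg i)).mp hsum0 i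
        (Finset.mem_erase.mpr ⟨hi, Finset.mem_univ i⟩)
    rw [hrank]
    rw [Fintype.card_le_one_iff]
    rintro ⟨a, ha⟩ ⟨b, hb⟩
    have ha' : a = j := by by_contra h; exact ha (hzero a h)
    have hb' : b = j := by by_contra h; exact hb (hzero b h)
    simp [ha', hb']
end

section
/- Let f : ℝ^r → ℝ, A ∈ ℝ^{r×n}, b ∈ ℝ^r, and p := n+1. For X ∈ ℝ^{p×p} written in block form X = [[x₁₁, z₂ᵀ],[z₃, Z]] with x₁₁ ∈ ℝ, z₂, z₃ ∈ ℝ^n, Z ∈ ℝ^{n×n}, define the linear map 𝒜(X) := (1/2)·A(z₂ + z₃). Let F be the set of real symmetric positive semidefinite p×p matrices X with rank(X) ≤ 1 and all diagonal entries equal to 1. Then the infimum of f(A x − b) over x ∈ {−1,1}^n equals the infimum of f(𝒜(X) − b) over X ∈ F, i.e., the binary problem and its lifted rank-one semidefinite reformulation have the same optimal value. -/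
open Matrix

lemma arg_simp {n r : ℕ} (A : Matrix (Fin r) (Fin n) ℝ) (b : Fin r → ℝ) (x : Fin n → ℝ) :
    (2 : ℝ)⁻¹ • (A *ᵥ fun j : Fin n => x j + x j) - b = A *ᵥ x - b := by
  have : (fun j : Fin n => x j + x j) = (2 : ℝ) • x := by
    funext j; simp [two_smul]; ring
  rw [this, mulVec_smul, smul_smul]
  norm_num

/-- The binary problem `min_{x ∈ {−1,1}^n} f(Ax − b)` and its lifted rank-one
semidefinite reformulation `min {f(𝒜(X) − b) : X ⪰ 0, rank X ≤ 1, diag X = e}` (with `p = n+1`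
and `𝒜(X) = (1/2)·A(z₂ + z₃)` in the block notation of the paper) have the same optimal value. -/
theorem lifted_rank_one_sdp_same_value (n r : ℕ) (f : (Fin r → ℝ) → ℝ)
    (A : Matrix (Fin r) (Fin n) ℝ) (b : Fin r → ℝ) :
    sInf {c : ℝ | ∃ x : Fin n → ℝ, (∀ i, x i = 1 ∨ x i = -1) ∧ c = f (A *ᵥ x - b)} =
    sInf {c : ℝ | ∃ X : Matrix (Fin (n + 1)) (Fin (n + 1)) ℝ,
      X.PosSemidef ∧ X.rank ≤ 1 ∧ (∀ i, X i i = 1) ∧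
      c = f ((2 : ℝ)⁻¹ • (A *ᵥ fun j : Fin n => X 0 j.succ + X j.succ 0) - b)} := by
  congr 1
  ext c
  constructor
  · rintro ⟨x, hx, rfl⟩
    set v : Fin (n + 1) → ℝ := Fin.cons 1 x with hv
    refine ⟨vecMulVec v v, ?_, ?_, ?_, ?_⟩
    · rw [vecMulVec_eq (Fin 1)]
      have h := posSemidef_conjTranspose_mul_self (replicateRow (Fin 1) v)
      convert h using 1
      rw [conjTranspose_replicateRow]
      rfl
    · rw [vecMulVec_eq (Fin 1)]
      calc (replicateCol (Fin 1) v * replicateRow (Fin 1) v).rank ≤ (replicateRow (Fin 1) v).rank :=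
            rank_mul_le_right _ _
        _ ≤ Fintype.card (Fin 1) := rank_le_card_height _
        _ = 1 := by simp
    · intro i
      rw [vecMulVec_apply]
      induction i using Fin.cases with
      | zero => simp [hv]
      | succ j => rcases hx j with h | h <;> simp [hv, h]
    · have key : (fun j : Fin n => vecMulVec v v 0 j.succ + vecMulVec v v j.succ 0)
          = fun j : Fin n => x j + x j := by
        funext j; simp [vecMulVec_apply, hv]
      rw [key, arg_simp]
  · rintro ⟨X, hpsd, hr, hd, rfl⟩
    set x : Fin n → ℝ := fun j => X 0 j.succ with hxdef
    have hsym : ∀ i j, X i j = X j i := fun i j => by simpa using congrFun (congrFun hpsd.1 j) i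
    -- every column is a multiple of column 0
    have hcol : ∀ j : Fin (n + 1), X 0 j * X 0 j = X j j := by
      intro j
      have col0ne : (X *ᵥ Pi.single (0 : Fin (n + 1)) 1) ≠ 0 := by
        intro h
        have := congrFun h 0
        rw [mulVec_single] at this
        simp [hd 0] at this
      have hspan : Submodule.span ℝ {X *ᵥ Pi.single (0 : Fin (n + 1)) 1}
          = LinearMap.range X.mulVecLin := by
        apply Submodule.eq_of_le_of_finrank_le
        · rw [Submodule.span_singleton_le_iff_mem]
          exact ⟨Pi.single 0 1, rfl⟩
        · rw [finrank_span_singleton col0ne]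
          exact hr
      have hmem : (X *ᵥ Pi.single j 1) ∈
          Submodule.span ℝ {X *ᵥ Pi.single (0 : Fin (n + 1)) 1} := by
        rw [hspan]; exact ⟨Pi.single j 1, rfl⟩
      obtain ⟨a, ha⟩ := Submodule.mem_span_singleton.mp hmem
      have ha0 := congrFun ha 0
      have haj := congrFun ha j
      simp only [mulVec_single_one, col_apply, Pi.smul_apply, smul_eq_mul, mul_one] at ha0 haj
      -- ha0 : a * X 0 0 = X 0 j   haj : a * X j 0 = X j j
      rw [hd 0, mul_one] at ha0
      rw [← ha0, ← haj, hsym j 0, ← ha0]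
    refine ⟨x, fun j => ?_, ?_⟩
    · have := hcol j.succ
      rw [hd j.succ] at this
      exact mul_self_eq_one_iff.mp this
    · have key : (fun j : Fin n => X 0 j.succ + X j.succ 0)
          = fun j : Fin n => x j + x j := by
        funext j; rw [hxdef]; rw [hsym j.succ 0]
      rw [key, arg_simp]
end

section
/- Let V ∈ ℝ^{m×p} and let u₁ be a unit eigenvector of VᵀV associated with its largest eigenvalue. Then for every V' ∈ ℝ^{m×p}, ‖V'‖² ≥ ‖V‖² + 2⟨V u₁ u₁ᵀ, V' − V⟩, where ‖·‖ is the spectral norm and ⟨A,B⟩ = tr(AᵀB). Equivalently, Γ := −2 V u₁ u₁ᵀ satisfies the supergradient (concavity-majorization) inequality −‖V'ᵀV'‖ ≤ −‖VᵀV‖ + ⟨Γ, V' − V⟩ for all V'. -/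
open Matrix

noncomputable section

/-- Squared Frobenius norm `‖A‖_F²`. -/
def frobSq {a b : ℕ} (A : Matrix (Fin a) (Fin b) ℝ) : ℝ := ∑ i, ∑ j, A i j ^ 2

/-- Frobenius norm `‖A‖_F`. -/
def frobNorm {a b : ℕ} (A : Matrix (Fin a) (Fin b) ℝ) : ℝ := Real.sqrt (frobSq A)

/-- Trace (Frobenius) inner product `⟨A,B⟩ = tr(AᵀB)`. -/
def frobInner {a b : ℕ} (A B : Matrix (Fin a) (Fin b) ℝ) : ℝ := ∑ i, ∑ j, A i j * B i j

/-- Squared spectral norm: `sup {‖Vx‖₂² : ‖x‖₂ = 1}`. -/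
def specSq {a b : ℕ} (V : Matrix (Fin a) (Fin b) ℝ) : ℝ :=
  sSup {c | ∃ x : Fin b → ℝ, (∑ j, x j ^ 2) = 1 ∧ c = ∑ i, (∑ j, V i j * x j) ^ 2}

/-- Spectral norm (largest singular value). -/
def specNorm {a b : ℕ} (V : Matrix (Fin a) (Fin b) ℝ) : ℝ := Real.sqrt (specSq V)

/-- Membership in `S`: all columns have unit Euclidean norm. -/
def unitCols {a b : ℕ} (V : Matrix (Fin a) (Fin b) ℝ) : Prop :=
  ∀ j, ∑ i, V i j ^ 2 = 1

/-- Column-wise normalization to unit Euclidean norm (projection onto `S`). -/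
def normalizeCols {a b : ℕ} (G : Matrix (Fin a) (Fin b) ℝ) : Matrix (Fin a) (Fin b) ℝ :=
  Matrix.of fun i j => G i j / Real.sqrt (∑ i', G i' j ^ 2)

/-- `u` is a unit eigenvector of `VᵀV` associated with its largest eigenvalue `lam`
(the Rayleigh-quotient bound states that `lam` is the largest eigenvalue). -/
def isTopEigen {a b : ℕ} (V : Matrix (Fin a) (Fin b) ℝ) (lam : ℝ) (u : Fin b → ℝ) : Prop :=
  (∑ j, u j ^ 2) = 1 ∧ (Vᵀ * V) *ᵥ u = lam • u ∧
    ∀ x : Fin b → ℝ, x ⬝ᵥ ((Vᵀ * V) *ᵥ x) ≤ lam * (x ⬝ᵥ x)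

/-- `Γ(V) = −2 V u uᵀ` where `u = u₁(V)`. -/
def GammaOf {a b : ℕ} (V : Matrix (Fin a) (Fin b) ℝ) (u : Fin b → ℝ) :
    Matrix (Fin a) (Fin b) ℝ := (-2 : ℝ) • (V * vecMulVec u u)

/-- The update direction `G(V) = (2ρ+L)⁻¹ (L V − ∇f̃(V) − ρ Γ(V))`. -/
def Gmap {a b : ℕ} (gradf : Matrix (Fin a) (Fin b) ℝ → Matrix (Fin a) (Fin b) ℝ)
    (ρ L : ℝ) (V : Matrix (Fin a) (Fin b) ℝ) (u : Fin b → ℝ) : Matrix (Fin a) (Fin b) ℝ :=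
  (2 * ρ + L)⁻¹ • (L • V - gradf V - ρ • GammaOf V u)

/-- Penalized objective `Φ_ρ(V) = f̃(V) + ρ(‖V‖_F² − ‖V‖²)`. -/
def Phi {a b : ℕ} (f : Matrix (Fin a) (Fin b) ℝ → ℝ) (ρ : ℝ)
    (V : Matrix (Fin a) (Fin b) ℝ) : ℝ := f V + ρ * (frobSq V - specSq V)

/-- Stationarity residual `𝒢_ρ(V,Γ) = inf_t ‖∇f̃(V) + 2ρV + ρΓ + V·Diag(t)‖_F`. -/
def Gres {a b : ℕ} (gradf : Matrix (Fin a) (Fin b) ℝ → Matrix (Fin a) (Fin b) ℝ) (ρ : ℝ)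
    (V Γ : Matrix (Fin a) (Fin b) ℝ) : ℝ :=
  ⨅ t : Fin b → ℝ, frobNorm (gradf V + (2 * ρ) • V + ρ • Γ + V * Matrix.diagonal t)

/-- The all-ones matrix `E` scaled by `1/√m`. -/
def Escaled (a b : ℕ) : Matrix (Fin a) (Fin b) ℝ :=
  (Real.sqrt a)⁻¹ • Matrix.of fun _ _ => (1 : ℝ)


lemma quad_eq {a b : ℕ} (A : Matrix (Fin a) (Fin b) ℝ) (x : Fin b → ℝ) :
    x ⬝ᵥ ((Aᵀ * A) *ᵥ x) = ∑ i, (∑ j, A i j * x j) ^ 2 := by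
  rw [← Matrix.mulVec_mulVec, Matrix.dotProduct_mulVec, Matrix.vecMul_transpose]
  simp [Matrix.mulVec, dotProduct, sq]

lemma specSq_bdd {a b : ℕ} (A : Matrix (Fin a) (Fin b) ℝ) :
    BddAbove {c | ∃ x : Fin b → ℝ, (∑ j, x j ^ 2) = 1 ∧
      c = ∑ i, (∑ j, A i j * x j) ^ 2} := by
  refine ⟨frobSq A, ?_⟩
  rintro c ⟨x, hx, rfl⟩
  unfold frobSq
  apply Finset.sum_le_sum
  intro i _
  calc (∑ j, A i j * x j) ^ 2 ≤ (∑ j, A i j ^ 2) * (∑ j, x j ^ 2) :=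
        Finset.sum_mul_sq_le_sq_mul_sq Finset.univ _ _
    _ = ∑ j, A i j ^ 2 := by rw [hx, mul_one]

lemma le_specSq {a b : ℕ} (A : Matrix (Fin a) (Fin b) ℝ) (x : Fin b → ℝ)
    (hx : (∑ j, x j ^ 2) = 1) : (∑ i, (∑ j, A i j * x j) ^ 2) ≤ specSq A :=
  le_csSup (specSq_bdd A) ⟨x, hx, rfl⟩

/-- If `u₁` is a unit eigenvector of `VᵀV` for its largest eigenvalue, then
for all `V'`, `‖V'‖² ≥ ‖V‖² + 2⟨V u₁ u₁ᵀ, V' − V⟩`; equivalently `Γ = −2Vu₁u₁ᵀ` is a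
supergradient: `−‖V'ᵀV'‖ ≤ −‖VᵀV‖ + ⟨Γ, V' − V⟩`. -/
theorem spectral_sq_supergradient (m p : ℕ) (V : Matrix (Fin m) (Fin p) ℝ)
    (lam : ℝ) (u : Fin p → ℝ) (htop : isTopEigen V lam u) :
    ∀ V' : Matrix (Fin m) (Fin p) ℝ,
      specSq V' ≥ specSq V + 2 * frobInner (V * vecMulVec u u) (V' - V) ∧
      -(specSq V') ≤ -(specSq V) + frobInner (GammaOf V u) (V' - V) := by
  obtain ⟨hu, heig, hray⟩ := htop
  set w : Fin m → ℝ := V *ᵥ u with hw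
  have hlam : lam = ∑ i, w i ^ 2 := by
    have h1 : u ⬝ᵥ ((Vᵀ * V) *ᵥ u) = lam := by
      rw [heig, dotProduct_smul]
      simp [dotProduct, sq] at hu ⊢
      rw [show (∑ j, u j * u j) = 1 from by simpa [mul_comm] using hu, mul_one]
    rw [← h1, quad_eq]
    simp [hw, Matrix.mulVec, dotProduct]
  have hVspec : specSq V = lam := by
    apply le_antisymm
    · refine csSup_le ⟨_, u, hu, rfl⟩ ?_
      rintro c ⟨x, hx, rfl⟩
      have := hray x
      rw [quad_eq] at this
      calc (∑ i, (∑ j, V i j * x j) ^ 2) ≤ lam * (x ⬝ᵥ x) := this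
        _ = lam := by
            rw [show x ⬝ᵥ x = 1 from by simpa [dotProduct, sq, mul_comm] using hx,
              mul_one]
    · have := le_specSq V u hu
      rw [hlam]
      convert this using 2 with i <;> rfl
  intro V'
  set w' : Fin m → ℝ := V' *ᵥ u with hw'
  have hinner : frobInner (V * vecMulVec u u) (V' - V)
      = ∑ i, w i * (w' i - w i) := by
    unfold frobInner
    refine Finset.sum_congr rfl fun i _ => ?_
    have : ∀ j, (V * vecMulVec u u) i j = w i * u j := by
      intro j
      simp [Matrix.mul_apply, Matrix.vecMulVec, hw, Matrix.mulVec, dotProduct,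
        Finset.sum_mul, mul_assoc]
    simp only [this]
    have hwi : w' i - w i = ∑ j, (V' - V) i j * u j := by
      simp [hw, hw', Matrix.mulVec, dotProduct, Matrix.sub_apply, sub_mul,
        Finset.sum_sub_distrib]
    rw [hwi, Finset.mul_sum]
    refine Finset.sum_congr rfl fun j _ => ?_
    ring
  have hkey : specSq V + 2 * frobInner (V * vecMulVec u u) (V' - V) ≤ specSq V' := by
    have h1 : (∑ i, (∑ j, V' i j * u j) ^ 2) ≤ specSq V' := le_specSq V' u hu
    have h2 : (∑ i, (∑ j, V' i j * u j) ^ 2) = ∑ i, w' i ^ 2 := by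
      refine Finset.sum_congr rfl fun i _ => ?_
      simp [hw', Matrix.mulVec, dotProduct]
    have h3 : (0:ℝ) ≤ ∑ i, (w' i - w i) ^ 2 :=
      Finset.sum_nonneg fun i _ => sq_nonneg _
    have h4 : (∑ i, (w' i - w i) ^ 2)
        = (∑ i, w' i ^ 2) - 2 * (∑ i, w i * (w' i - w i)) - (∑ i, w i ^ 2) := by
      rw [Finset.mul_sum, ← Finset.sum_sub_distrib, ← Finset.sum_sub_distrib]
      refine Finset.sum_congr rfl fun i _ => ?_
      ring
    rw [hVspec, hlam, hinner]
    nlinarith [h1, h2.symm ▸ h1]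
  refine ⟨hkey, ?_⟩
  have hG : frobInner (GammaOf V u) (V' - V)
      = -2 * frobInner (V * vecMulVec u u) (V' - V) := by
    unfold GammaOf frobInner
    simp [Finset.mul_sum, mul_assoc]
  rw [hG]
  linarith


end
end

section
/- Let m, p be positive integers, S the set of matrices in ℝ^{m×p} all of whose columns have unit Euclidean norm, V⁰ ∈ S, C ∈ ℝ^{m×p}, ρ > 0, L > 0, and set G := (1/(2ρ+L))(L V⁰ − C). If every column of G is nonzero, then the matrix obtained from G by normalizing each column to unit Euclidean norm is a global minimizer over S of the function V ↦ ⟨C, V⟩ + ρ‖V‖_F² + (L/2)‖V − V⁰‖_F². (This gives the closed-form solution of the linearized proximal subproblem in the DCRA inner solver.) -/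
open Matrix

noncomputable section

lemma frobInner_smul_sub {a b : ℕ} (c d : ℝ) (A B W : Matrix (Fin a) (Fin b) ℝ) :
    frobInner (c • A - d • B) W = c * frobInner A W - d * frobInner B W := by
  simp only [frobInner, Matrix.sub_apply, Matrix.smul_apply, smul_eq_mul,
    Finset.mul_sum, ← Finset.sum_sub_distrib]
  apply Finset.sum_congr rfl; intro i _
  apply Finset.sum_congr rfl; intro j _
  ring

lemma frobSq_sub' {a b : ℕ} (A B : Matrix (Fin a) (Fin b) ℝ) :
    frobSq (A - B) = frobSq A - 2 * frobInner B A + frobSq B := by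
  simp only [frobSq, frobInner, Matrix.sub_apply]
  have h : ∀ x y : ℝ, (x - y) ^ 2 = x ^ 2 - 2 * (y * x) + y ^ 2 := by intros; ring
  simp_rw [h, Finset.sum_add_distrib, Finset.sum_sub_distrib, Finset.mul_sum]

lemma frobSq_of_unitCols {a b : ℕ} (V : Matrix (Fin a) (Fin b) ℝ) (hV : unitCols V) :
    frobSq V = b := by
  unfold unitCols at hV
  rw [frobSq, Finset.sum_comm]
  simp [hV]

lemma frobInner_col {a b : ℕ} (A B : Matrix (Fin a) (Fin b) ℝ) :
    frobInner A B = ∑ j, ∑ i, A i j * B i j := by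
  rw [frobInner, Finset.sum_comm]

/-- Closed-form solution of the linearized proximal subproblem: if every column
of `G = (2ρ+L)⁻¹(L V⁰ − C)` is nonzero, then the column-normalization of `G` globally minimizes
`V ↦ ⟨C,V⟩ + ρ‖V‖_F² + (L/2)‖V − V⁰‖_F²` over the set `S` of unit-column matrices. -/
theorem linearized_subproblem_closed_form (m p : ℕ) (hm : 0 < m) (hp : 0 < p)
    (V0 C : Matrix (Fin m) (Fin p) ℝ) (ρ L : ℝ) (hρ : 0 < ρ) (hL : 0 < L)
    (hV0 : unitCols V0)
    (G : Matrix (Fin m) (Fin p) ℝ) (hG : G = (2 * ρ + L)⁻¹ • (L • V0 - C))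
    (hcol : ∀ j, ∃ i, G i j ≠ 0) :
    unitCols (normalizeCols G) ∧
    ∀ V : Matrix (Fin m) (Fin p) ℝ, unitCols V →
      frobInner C (normalizeCols G) + ρ * frobSq (normalizeCols G)
          + (L / 2) * frobSq (normalizeCols G - V0)
        ≤ frobInner C V + ρ * frobSq V + (L / 2) * frobSq (V - V0) := by
  set s : Fin p → ℝ := fun j => ∑ i, G i j ^ 2 with hs
  have hspos : ∀ j, 0 < s j := by
    intro j
    obtain ⟨i, hi⟩ := hcol j
    exact Finset.sum_pos' (fun i _ => sq_nonneg _)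
      ⟨i, Finset.mem_univ i, by positivity⟩
  have hsqrt : ∀ j, 0 < Real.sqrt (s j) := fun j => Real.sqrt_pos.2 (hspos j)
  set N := normalizeCols G with hN
  have hNij : ∀ i j, N i j = G i j / Real.sqrt (s j) := fun i j => rfl
  have hNunit : unitCols N := by
    intro j
    simp only [hNij, div_pow, ← Finset.sum_div]
    rw [Real.sq_sqrt (hspos j).le, div_self (hspos j).ne']
  refine ⟨hNunit, fun V hV => ?_⟩
  -- the sum 2ρ+L is positive
  have hsum : 0 < 2 * ρ + L := by linarith
  -- C = L • V0 - (2ρ+L) • G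
  have hC : C = L • V0 - (2 * ρ + L) • G := by
    rw [hG, smul_smul, mul_inv_cancel₀ hsum.ne', one_smul]
    abel
  -- key: ⟨G, V⟩ ≤ ⟨G, N⟩
  have hkey : frobInner G V ≤ frobInner G N := by
    rw [frobInner_col, frobInner_col]
    apply Finset.sum_le_sum
    intro j _
    have hR : ∑ i, G i j * N i j = Real.sqrt (s j) := by
      have h1 : ∑ i, G i j * N i j = (∑ i, G i j ^ 2) / Real.sqrt (s j) := by
        rw [Finset.sum_div]
        refine Finset.sum_congr rfl fun i _ => ?_
        rw [hNij]; ring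
      rw [h1]
      exact Real.div_sqrt
    rw [hR]
    have hcs : (∑ i, G i j * V i j) ^ 2 ≤ s j * 1 := by
      rw [← hV j]
      exact Finset.sum_mul_sq_le_sq_mul_sq Finset.univ _ _
    calc ∑ i, G i j * V i j ≤ |∑ i, G i j * V i j| := le_abs_self _
      _ = Real.sqrt ((∑ i, G i j * V i j) ^ 2) := (Real.sqrt_sq_eq_abs _).symm
      _ ≤ Real.sqrt (s j) := by
          apply Real.sqrt_le_sqrt; linarith
  -- rewrite both sides
  have hobj : ∀ W : Matrix (Fin m) (Fin p) ℝ, unitCols W →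
      frobInner C W + ρ * frobSq W + (L / 2) * frobSq (W - V0)
        = -(2 * ρ + L) * frobInner G W + (ρ * p + L * p) := by
    intro W hW
    have h1 : frobSq (W - V0) = (p : ℝ) - 2 * frobInner V0 W + p := by
      rw [frobSq_sub', frobSq_of_unitCols W hW, frobSq_of_unitCols V0 hV0]
    have h2 : frobInner C W = L * frobInner V0 W - (2 * ρ + L) * frobInner G W := by
      rw [hC, frobInner_smul_sub]
    rw [h1, h2, frobSq_of_unitCols W hW]; ring
  rw [hobj N hNunit, hobj V hV]
  have := mul_le_mul_of_nonpos_left hkey (by linarith : -(2 * ρ + L) ≤ 0)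
  linarith

end
end

section
/- (Proposition 1(iii), residual bound.) Let V ∈ S with every column of G(V) nonzero and let V⁺ := Proj_S(G(V)) be the algorithmic update. Then there exists t ∈ ℝ^p such that ‖∇f̃(V⁺) + 2ρV⁺ + ρΓ(V) + V⁺·Diag(t)‖_F ≤ (L + L_f̃)·‖V⁺ − V‖_F; consequently the stationarity residual satisfies 𝒢_ρ(V⁺, Γ(V)) ≤ (L + L_f̃)·‖V⁺ − V‖_F. -/
open Matrix

noncomputable section

attribute [local instance] Matrix.frobeniusNormedAddCommGroup Matrix.frobeniusNormedSpace

/-- The continuous linear functional `W ↦ ⟨A, W⟩` (Frobenius pairing); used to state that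
`∇f̃` is the gradient of `f̃` with respect to the trace inner product. -/
def frobCLM {a b : ℕ} (A : Matrix (Fin a) (Fin b) ℝ) :
    Matrix (Fin a) (Fin b) ℝ →L[ℝ] ℝ :=
  LinearMap.toContinuousLinearMap
    { toFun := fun W => frobInner A W
      map_add' := fun W W' => by
        simp [frobInner, Matrix.add_apply, mul_add, Finset.sum_add_distrib]
      map_smul' := fun c W => by
        simp [frobInner, Matrix.smul_apply, smul_eq_mul, Finset.mul_sum, mul_left_comm] }

lemma frobNorm_eq_norm {a b : ℕ} (A : Matrix (Fin a) (Fin b) ℝ) : frobNorm A = ‖A‖ := by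
  rw [Matrix.frobenius_norm_def, frobNorm, frobSq, Real.sqrt_eq_rpow]
  congr 1
  refine Finset.sum_congr rfl fun i _ => Finset.sum_congr rfl fun j _ => ?_
  simp [Real.norm_eq_abs, sq_abs]

lemma frobNorm_nonneg {a b : ℕ} (A : Matrix (Fin a) (Fin b) ℝ) : 0 ≤ frobNorm A :=
  Real.sqrt_nonneg _

/-- Proposition 1(iii), residual bound. For the algorithmic update
`V⁺ = Proj_S(G(V))` there exists `t ∈ ℝ^p` with
`‖∇f̃(V⁺) + 2ρV⁺ + ρΓ(V) + V⁺·Diag(t)‖_F ≤ (L + L_f̃)·‖V⁺ − V‖_F`; consequently the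
stationarity residual satisfies `𝒢_ρ(V⁺, Γ(V)) ≤ (L + L_f̃)·‖V⁺ − V‖_F`. -/
theorem dcra_residual_bound (m p : ℕ)
    (ftilde : Matrix (Fin m) (Fin p) ℝ → ℝ)
    (gradf : Matrix (Fin m) (Fin p) ℝ → Matrix (Fin m) (Fin p) ℝ)
    (Lf : ℝ) (hLf : 0 < Lf)
    (hderiv : ∀ W : Matrix (Fin m) (Fin p) ℝ, HasFDerivAt ftilde (frobCLM (gradf W)) W)
    (hlip : ∀ W W' : Matrix (Fin m) (Fin p) ℝ,
      frobNorm (gradf W - gradf W') ≤ Lf * frobNorm (W - W'))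
    (ρ L : ℝ) (hρ : 0 < ρ) (hL : 0 < L)
    (V : Matrix (Fin m) (Fin p) ℝ) (hV : unitCols V)
    (u : Fin p → ℝ) (lam : ℝ) (htop : isTopEigen V lam u)
    (hcol : ∀ j, ∃ i, Gmap gradf ρ L V u i j ≠ 0)
    (Vp : Matrix (Fin m) (Fin p) ℝ) (hVp : Vp = normalizeCols (Gmap gradf ρ L V u)) :
    (∃ t : Fin p → ℝ,
      frobNorm (gradf Vp + (2 * ρ) • Vp + ρ • GammaOf V u + Vp * Matrix.diagonal t)
        ≤ (L + Lf) * frobNorm (Vp - V)) ∧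
    Gres gradf ρ Vp (GammaOf V u) ≤ (L + Lf) * frobNorm (Vp - V) := by
  set Γ := GammaOf V u with hΓ
  set G := Gmap gradf ρ L V u with hGdef
  set n : Fin p → ℝ := fun j => Real.sqrt (∑ i, G i j ^ 2) with hn
  have hnpos : ∀ j, 0 < n j := by
    intro j
    obtain ⟨i, hi⟩ := hcol j
    apply Real.sqrt_pos.mpr
    apply Finset.sum_pos' (fun i' _ => sq_nonneg _)
    exact ⟨i, Finset.mem_univ i, by positivity⟩
  have hcoef : (0:ℝ) < 2 * ρ + L := by linarith
  set t : Fin p → ℝ := fun j => (2 * ρ + L) * n j - (2 * ρ + L) with ht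
  have hVpe : ∀ i j, Vp i j = G i j / n j := by
    intro i j; rw [hVp]; rfl
  have hGe : ∀ i j, (2 * ρ + L) * G i j = L * V i j - gradf V i j - ρ * Γ i j := by
    intro i j
    have : G i j = (2 * ρ + L)⁻¹ * (L * V i j - gradf V i j - ρ * Γ i j) := by
      rw [hGdef]; simp [Gmap, Matrix.sub_apply, Matrix.smul_apply, hΓ]
    rw [this]
    field_simp
  have hM : gradf Vp + (2 * ρ) • Vp + ρ • Γ + Vp * Matrix.diagonal t
      = (gradf Vp - gradf V) - L • (Vp - V) := by
    ext i j
    have hne : n j ≠ 0 := (hnpos j).ne'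
    have h1 : Vp i j * t j = (L * V i j - gradf V i j - ρ * Γ i j) - (2 * ρ + L) * Vp i j := by
      rw [hVpe i j, ht]
      rw [← hGe i j]
      field_simp
    simp only [Matrix.add_apply, Matrix.sub_apply, Matrix.smul_apply, Matrix.mul_diagonal,
      smul_eq_mul]
    rw [h1]; ring
  have hbound : frobNorm (gradf Vp + (2 * ρ) • Vp + ρ • Γ + Vp * Matrix.diagonal t)
      ≤ (L + Lf) * frobNorm (Vp - V) := by
    rw [hM, frobNorm_eq_norm]
    calc ‖(gradf Vp - gradf V) - L • (Vp - V)‖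
        ≤ ‖gradf Vp - gradf V‖ + ‖L • (Vp - V)‖ := norm_sub_le _ _
      _ = ‖gradf Vp - gradf V‖ + |L| * ‖Vp - V‖ := by rw [norm_smul]; rfl
      _ ≤ Lf * ‖Vp - V‖ + L * ‖Vp - V‖ := by
          have := hlip Vp V
          rw [frobNorm_eq_norm, frobNorm_eq_norm] at this
          rw [abs_of_pos hL]
          linarith
      _ = (L + Lf) * ‖Vp - V‖ := by ring
      _ = (L + Lf) * frobNorm (Vp - V) := by rw [frobNorm_eq_norm]
  refine ⟨⟨t, hbound⟩, ?_⟩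
  have hbdd : BddBelow (Set.range fun t' : Fin p → ℝ =>
      frobNorm (gradf Vp + (2 * ρ) • Vp + ρ • Γ + Vp * Matrix.diagonal t')) := by
    refine ⟨0, fun x hx => ?_⟩
    obtain ⟨t', rfl⟩ := hx
    exact frobNorm_nonneg _
  exact le_trans (ciInf_le hbdd t) hbound

end
end

section
/- (Lemma 1, one-step gap reduction.) Let V⁰ ∈ S and suppose every entry of the unit eigenvector u₁(V⁰) of (V⁰)ᵀV⁰ for its largest eigenvalue is nonzero. Define μ := min over 1 ≤ j ≤ p of |u₁(V⁰)_j| > 0 and ϖ := (L + 2L_f̃)√p + ‖∇f̃(E/√m)‖_F, where E is the m×p all-ones matrix. Let c₀ ∈ (0,1) and assume ρ ≥ (Lp + ϖ)/(μ c₀). Then every column of G(V⁰) is nonzero, and the algorithmic update V¹ := Proj_S(G(V⁰)) satisfies ‖V¹‖_F² − ‖V¹‖² ≤ c₀². -/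
open Matrix

noncomputable section

attribute [local instance] Matrix.frobeniusNormedAddCommGroup Matrix.frobeniusNormedSpace

private lemma csA {ι : Type*} [Fintype ι] (f g : ι → ℝ) :
    (∑ i, f i * g i) ^ 2 ≤ (∑ i, f i ^ 2) * ∑ i, g i ^ 2 :=
  Finset.sum_mul_sq_le_sq_mul_sq _ _ _

private lemma sum_sq_nn {ι : Type*} [Fintype ι] (f : ι → ℝ) : (0:ℝ) ≤ ∑ i, f i ^ 2 :=
  Finset.sum_nonneg fun _ _ => sq_nonneg _

private lemma csB {ι : Type*} [Fintype ι] (f g : ι → ℝ) :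
    (∑ i, f i * g i) ≤ Real.sqrt (∑ i, f i ^ 2) * Real.sqrt (∑ i, g i ^ 2) := by
  have h := csA f g
  nlinarith [Real.sq_sqrt (sum_sq_nn f), Real.sq_sqrt (sum_sq_nn g),
    Real.sqrt_nonneg (∑ i, f i ^ 2), Real.sqrt_nonneg (∑ i, g i ^ 2),
    mul_nonneg (Real.sqrt_nonneg (∑ i, f i ^ 2)) (Real.sqrt_nonneg (∑ i, g i ^ 2))]

private lemma sum_expand_add {ι : Type*} [Fintype ι] (f g : ι → ℝ) :
    (∑ i, (f i + g i) ^ 2) = (∑ i, f i ^ 2) + 2 * (∑ i, f i * g i) + ∑ i, g i ^ 2 := by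
  have h : ∀ i, (f i + g i) ^ 2 = f i ^ 2 + 2 * (f i * g i) + g i ^ 2 := fun i => by ring
  simp only [h, Finset.sum_add_distrib, Finset.mul_sum]

private lemma sqrt_tri {ι : Type*} [Fintype ι] (f g : ι → ℝ) :
    Real.sqrt (∑ i, (f i + g i) ^ 2) ≤
      Real.sqrt (∑ i, f i ^ 2) + Real.sqrt (∑ i, g i ^ 2) := by
  set A := Real.sqrt (∑ i, f i ^ 2) with hA
  set B := Real.sqrt (∑ i, g i ^ 2) with hB
  have hA0 : 0 ≤ A := Real.sqrt_nonneg _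
  have hB0 : 0 ≤ B := Real.sqrt_nonneg _
  have hA2 : A ^ 2 = ∑ i, f i ^ 2 := Real.sq_sqrt (sum_sq_nn f)
  have hB2 : B ^ 2 = ∑ i, g i ^ 2 := Real.sq_sqrt (sum_sq_nn g)
  have hfg : (∑ i, f i * g i) ≤ A * B := csB f g
  have hle : (∑ i, (f i + g i) ^ 2) ≤ (A + B) ^ 2 := by
    rw [sum_expand_add]; nlinarith
  calc Real.sqrt (∑ i, (f i + g i) ^ 2) ≤ Real.sqrt ((A + B) ^ 2) := Real.sqrt_le_sqrt hle
    _ = A + B := Real.sqrt_sq (by positivity)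

private lemma sum_sub_mul_sq {ι : Type*} [Fintype ι] (a b : ι → ℝ) (c : ℝ) :
    ∑ i, (a i - c * b i) ^ 2 =
      (∑ i, a i ^ 2) - 2 * c * (∑ i, a i * b i) + c ^ 2 * ∑ i, b i ^ 2 := by
  have h : ∀ i, (a i - c * b i) ^ 2 = a i ^ 2 - 2 * c * (a i * b i) + c ^ 2 * b i ^ 2 :=
    fun i => by ring
  simp only [h, Finset.sum_add_distrib, Finset.sum_sub_distrib, Finset.mul_sum]

private lemma sqrt_tri2 {ι κ : Type*} [Fintype ι] [Fintype κ] (f g : ι → κ → ℝ) :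
    Real.sqrt (∑ i, ∑ j, (f i j + g i j) ^ 2) ≤
      Real.sqrt (∑ i, ∑ j, f i j ^ 2) + Real.sqrt (∑ i, ∑ j, g i j ^ 2) := by
  have e1 : (∑ x : ι × κ, (f x.1 x.2 + g x.1 x.2) ^ 2) = ∑ i, ∑ j, (f i j + g i j) ^ 2 :=
    Fintype.sum_prod_type _
  have e2 : (∑ x : ι × κ, f x.1 x.2 ^ 2) = ∑ i, ∑ j, f i j ^ 2 := Fintype.sum_prod_type _
  have e3 : (∑ x : ι × κ, g x.1 x.2 ^ 2) = ∑ i, ∑ j, g i j ^ 2 := Fintype.sum_prod_type _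
  rw [← e1, ← e2, ← e3]
  exact sqrt_tri _ _

private lemma frob_add_le {a b : ℕ} (A B : Matrix (Fin a) (Fin b) ℝ) :
    frobNorm (A + B) ≤ frobNorm A + frobNorm B := by
  unfold frobNorm frobSq
  simp only [Matrix.add_apply]
  exact sqrt_tri2 _ _

private lemma frob_neg {a b : ℕ} (A : Matrix (Fin a) (Fin b) ℝ) :
    frobNorm (-A) = frobNorm A := by
  unfold frobNorm frobSq
  simp [Matrix.neg_apply]

set_option maxHeartbeats 4000000 in
/-- Lemma 1, one-step gap reduction. If every entry of the unit top eigenvector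
`u₁(V⁰)` of `(V⁰)ᵀV⁰` is nonzero, `μ = min_j |u₁(V⁰)_j|`, `ϖ = (L + 2L_f̃)√p + ‖∇f̃(E/√m)‖_F`,
`c₀ ∈ (0,1)` and `ρ ≥ (Lp + ϖ)/(μc₀)`, then every column of `G(V⁰)` is nonzero and the update
`V¹ = Proj_S(G(V⁰))` satisfies `‖V¹‖_F² − ‖V¹‖² ≤ c₀²`. -/
theorem dcra_one_step_gap_reduction (m p : ℕ) (hm : 0 < m) (hp : 0 < p)
    (ftilde : Matrix (Fin m) (Fin p) ℝ → ℝ)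
    (gradf : Matrix (Fin m) (Fin p) ℝ → Matrix (Fin m) (Fin p) ℝ)
    (Lf : ℝ) (hLf : 0 < Lf)
    (hderiv : ∀ W : Matrix (Fin m) (Fin p) ℝ, HasFDerivAt ftilde (frobCLM (gradf W)) W)
    (hlip : ∀ W W' : Matrix (Fin m) (Fin p) ℝ,
      frobNorm (gradf W - gradf W') ≤ Lf * frobNorm (W - W'))
    (ρ L : ℝ) (hρpos : 0 < ρ) (hL : 0 < L)
    (V0 : Matrix (Fin m) (Fin p) ℝ) (hV0 : unitCols V0)
    (u : Fin p → ℝ) (lam : ℝ) (htop : isTopEigen V0 lam u)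
    (hzero : ∀ j, u j ≠ 0)
    (μ ϖ : ℝ) (hμ : μ = ⨅ j, |u j|)
    (hϖ : ϖ = (L + 2 * Lf) * Real.sqrt p + frobNorm (gradf (Escaled m p)))
    (c0 : ℝ) (hc0 : c0 ∈ Set.Ioo (0 : ℝ) 1)
    (hρ : (L * p + ϖ) / (μ * c0) ≤ ρ) :
    (∀ j, ∃ i, Gmap gradf ρ L V0 u i j ≠ 0) ∧
    frobSq (normalizeCols (Gmap gradf ρ L V0 u))
        - specSq (normalizeCols (Gmap gradf ρ L V0 u)) ≤ c0 ^ 2 := by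
  obtain ⟨hc0p, hc0l⟩ := hc0
  obtain ⟨hu_norm, hu_eig, hu_ray⟩ := htop
  have hpR : (1:ℝ) ≤ (p:ℝ) := by exact_mod_cast hp
  have hp1 : (1:ℝ) ≤ Real.sqrt p := by
    rw [show (1:ℝ) = Real.sqrt 1 by simp]
    exact Real.sqrt_le_sqrt hpR
  have hCnn : 0 ≤ frobNorm (gradf (Escaled m p)) := Real.sqrt_nonneg _
  have hϖpos : 0 < ϖ := by nlinarith
  haveI : Nonempty (Fin p) := ⟨⟨0, hp⟩⟩
  -- μ facts
  have hbdd : BddBelow (Set.range fun j : Fin p => |u j|) :=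
    (Set.finite_range _).bddBelow
  have hμle : ∀ j, μ ≤ |u j| := by
    intro j; rw [hμ]; exact ciInf_le hbdd j
  have hμpos : 0 < μ := by
    obtain ⟨j0, hj0⟩ := Finite.exists_min fun j : Fin p => |u j|
    have h1 : |u j0| ≤ μ := by rw [hμ]; exact le_ciInf hj0
    have h2 : 0 < |u j0| := abs_pos.2 (hzero j0)
    linarith
  -- z := V0 u and lam = ‖z‖²
  obtain ⟨z, hzdef⟩ : ∃ z : Fin m → ℝ, ∀ i, z i = ∑ k, V0 i k * u k :=
    ⟨_, fun _ => rfl⟩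
  have hzv : V0 *ᵥ u = z := by
    funext i
    rw [hzdef i]
    simp [Matrix.mulVec, dotProduct]
  have hlam : (∑ i, z i ^ 2) = lam := by
    have h1 : u ⬝ᵥ ((V0ᵀ * V0) *ᵥ u) = z ⬝ᵥ z := by
      rw [← Matrix.mulVec_mulVec, Matrix.dotProduct_mulVec, Matrix.vecMul_transpose, hzv]
    have h2 : u ⬝ᵥ ((V0ᵀ * V0) *ᵥ u) = lam := by
      rw [hu_eig]
      have e : u ⬝ᵥ (lam • u) = lam * ∑ j, u j ^ 2 := by
        simp only [dotProduct, Pi.smul_apply, smul_eq_mul, Finset.mul_sum]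
        exact Finset.sum_congr rfl fun j _ => by ring
      rw [e, hu_norm, mul_one]
    rw [← h2, h1]
    simp only [dotProduct, pow_two]
  have hlam1 : (1:ℝ) ≤ lam := by
    set j0 : Fin p := ⟨0, hp⟩
    have h := hu_ray (Pi.single j0 1)
    have h1 : (Pi.single j0 1 : Fin p → ℝ) ⬝ᵥ ((V0ᵀ * V0) *ᵥ Pi.single j0 1) = 1 := by
      rw [Matrix.mulVec_single_one]
      simp only [single_dotProduct, mul_one, one_mul, Matrix.col_apply, Matrix.mul_apply,
        Matrix.transpose_apply]
      have : (∑ i, V0 i j0 * V0 i j0) = ∑ i, V0 i j0 ^ 2 :=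
        Finset.sum_congr rfl fun i _ => (pow_two _).symm
      rw [this, hV0 j0]
    have h2 : (Pi.single j0 1 : Fin p → ℝ) ⬝ᵥ (Pi.single j0 1 : Fin p → ℝ) = 1 := by
      simp [single_dotProduct]
    rw [h1, h2, mul_one] at h
    exact h
  have hlampos : (0:ℝ) < lam := by linarith
  have hlamne : lam ≠ 0 := ne_of_gt hlampos
  have hsl1 : (1:ℝ) ≤ Real.sqrt lam := by
    rw [show (1:ℝ) = Real.sqrt 1 by simp]
    exact Real.sqrt_le_sqrt hlam1
  have hslnn : 0 ≤ Real.sqrt lam := Real.sqrt_nonneg _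
  have hslsq : Real.sqrt lam * Real.sqrt lam = lam := Real.mul_self_sqrt (le_of_lt hlampos)
  -- basic matrices
  obtain ⟨R, hRdef⟩ : ∃ R : Fin m → Fin p → ℝ, ∀ i j, R i j = L * V0 i j - gradf V0 i j :=
    ⟨_, fun _ _ => rfl⟩
  obtain ⟨H, hHdef⟩ : ∃ H : Fin m → Fin p → ℝ,
      ∀ i j, H i j = R i j + (2 * ρ * u j) * z i := ⟨_, fun _ _ => rfl⟩
  obtain ⟨N, hNdef⟩ : ∃ N : Fin p → ℝ, ∀ j, N j = ∑ i, H i j ^ 2 := ⟨_, fun _ => rfl⟩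
  obtain ⟨dH, hdHdef⟩ : ∃ dH : Fin p → ℝ, ∀ j, dH j = ∑ i, H i j * z i := ⟨_, fun _ => rfl⟩
  obtain ⟨dR, hdRdef⟩ : ∃ dR : Fin p → ℝ, ∀ j, dR j = ∑ i, R i j * z i := ⟨_, fun _ => rfl⟩
  obtain ⟨gcol, hgcoldef⟩ : ∃ gcol : Fin p → ℝ,
      ∀ j, gcol j = Real.sqrt (∑ i, gradf V0 i j ^ 2) := ⟨_, fun _ => rfl⟩
  obtain ⟨bb, hbbdef⟩ : ∃ bb : Fin p → ℝ, ∀ j, bb j = L + gcol j := ⟨_, fun _ => rfl⟩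
  set K : ℝ := 2 * ρ * μ with hKdef
  set gF : ℝ := frobNorm (gradf V0) with hgFdef
  have hgFnn : 0 ≤ gF := Real.sqrt_nonneg _
  have hgcolnn : ∀ j, 0 ≤ gcol j := fun j => (hgcoldef j) ▸ Real.sqrt_nonneg _
  have hbbnn : ∀ j, 0 ≤ bb j := fun j => by rw [hbbdef]; have := hgcolnn j; linarith
  -- Gmap in terms of H
  set c : ℝ := 2 * ρ + L with hcdef
  have hcpos : 0 < c := by rw [hcdef]; linarith
  have hGH : ∀ i j, Gmap gradf ρ L V0 u i j = c⁻¹ * H i j := by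
    intro i j
    have hzu : (∑ k, V0 i k * (u k * u j)) = z i * u j := by
      rw [hzdef i, Finset.sum_mul]
      exact Finset.sum_congr rfl fun k _ => by ring
    simp only [Gmap, GammaOf, Matrix.smul_apply, Matrix.sub_apply, smul_eq_mul,
      Matrix.mul_apply, Matrix.vecMulVec_apply, hcdef]
    rw [hzu, hHdef i j, hRdef i j]
    ring
  -- Frobenius-norm bound on the gradient
  have hV0frob : frobSq V0 = p := by
    have hV0' : ∀ j, (∑ i, V0 i j ^ 2) = 1 := hV0
    unfold frobSq
    rw [Finset.sum_comm]
    simp [hV0']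
  have hEfrob : frobSq (Escaled m p) = p := by
    unfold frobSq
    have hmne : ((m:ℝ)) ≠ 0 := by positivity
    have he : ∀ i : Fin m, ∀ j : Fin p, (Escaled m p) i j ^ 2 = (m:ℝ)⁻¹ := by
      intro i j
      simp only [Escaled, Matrix.smul_apply, Matrix.of_apply, smul_eq_mul, mul_one]
      rw [← Real.sqrt_inv, Real.sq_sqrt (by positivity)]
    simp only [he, Finset.sum_const, Finset.card_fin, nsmul_eq_mul]
    field_simp
  have hfrobV0E : frobNorm (V0 - Escaled m p) ≤ 2 * Real.sqrt p := by
    have h1 : V0 - Escaled m p = V0 + -(Escaled m p) := by rw [sub_eq_add_neg]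
    rw [h1]
    have h2 := frob_add_le V0 (-(Escaled m p))
    rw [frob_neg] at h2
    have h3 : frobNorm V0 = Real.sqrt p := by rw [frobNorm, hV0frob]
    have h4 : frobNorm (Escaled m p) = Real.sqrt p := by rw [frobNorm, hEfrob]
    rw [h3, h4] at h2
    linarith
  have hgF : L * Real.sqrt p + gF ≤ ϖ := by
    have h1 : gradf V0 = (gradf V0 - gradf (Escaled m p)) + gradf (Escaled m p) := by abel
    have h2 : gF ≤ frobNorm (gradf V0 - gradf (Escaled m p))
        + frobNorm (gradf (Escaled m p)) := by
      rw [hgFdef]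
      calc frobNorm (gradf V0)
          = frobNorm ((gradf V0 - gradf (Escaled m p)) + gradf (Escaled m p)) := by rw [← h1]
        _ ≤ _ := frob_add_le _ _
    have h3 := hlip V0 (Escaled m p)
    have h4 : Lf * frobNorm (V0 - Escaled m p) ≤ Lf * (2 * Real.sqrt p) :=
      mul_le_mul_of_nonneg_left hfrobV0E (le_of_lt hLf)
    rw [hϖ]
    nlinarith
  have hbbϖ : ∀ j, bb j ≤ ϖ := by
    intro j
    have h1 : ∑ i, gradf V0 i j ^ 2 ≤ frobSq (gradf V0) := by
      unfold frobSq
      rw [Finset.sum_comm]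
      exact Finset.single_le_sum (f := fun j' => ∑ i, gradf V0 i j' ^ 2)
        (fun j' _ => sum_sq_nn _) (Finset.mem_univ j)
    have h2 : gcol j ≤ gF := by
      rw [hgcoldef, hgFdef, frobNorm]
      exact Real.sqrt_le_sqrt h1
    have h3 : L ≤ L * Real.sqrt p := by nlinarith
    rw [hbbdef]
    linarith
  -- key scalar inequality from hρ
  have hρμ : L * p + ϖ ≤ ρ * (μ * c0) := by
    have h := (div_le_iff₀ (by positivity : (0:ℝ) < μ * c0)).1 hρ
    linarith
  have hKϖ2 : ϖ / c0 ≤ K - ϖ := by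
    rw [div_le_iff₀ hc0p, hKdef]
    have hLp : (0:ℝ) ≤ L * p := by positivity
    have hA : ϖ * c0 ≤ ϖ := by nlinarith [hϖpos, hc0l, hc0p]
    nlinarith [hρμ, hA, hLp]
  have hKϖpos : 0 < K - ϖ := lt_of_lt_of_le (by positivity) hKϖ2
  have hKbb : ∀ j, K - ϖ ≤ K - bb j := fun j => by have := hbbϖ j; linarith
  have hKbbpos : ∀ j, 0 < K - bb j := fun j => lt_of_lt_of_le hKϖpos (hKbb j)
  -- column norms of R
  have hRcol : ∀ j, Real.sqrt (∑ i, R i j ^ 2) ≤ bb j := by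
    intro j
    have h1 : ∀ i, R i j ^ 2 = ((fun i => L * V0 i j) i + (fun i => -(gradf V0 i j)) i) ^ 2 := by
      intro i; rw [hRdef]; ring_nf
    calc Real.sqrt (∑ i, R i j ^ 2)
        = Real.sqrt (∑ i, ((fun i => L * V0 i j) i + (fun i => -(gradf V0 i j)) i) ^ 2) := by
          rw [Finset.sum_congr rfl fun i _ => h1 i]
      _ ≤ Real.sqrt (∑ i, (L * V0 i j) ^ 2) + Real.sqrt (∑ i, (-(gradf V0 i j)) ^ 2) :=
          sqrt_tri _ _
      _ = bb j := by
          have e1 : (∑ i, (L * V0 i j) ^ 2) = L ^ 2 * ∑ i, V0 i j ^ 2 := by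
            rw [Finset.mul_sum]; exact Finset.sum_congr rfl fun i _ => by ring
          have e2 : (∑ i, (-(gradf V0 i j)) ^ 2) = ∑ i, gradf V0 i j ^ 2 := by
            exact Finset.sum_congr rfl fun i _ => by ring
          rw [e1, e2, hV0 j, mul_one, Real.sqrt_sq (le_of_lt hL), hbbdef, hgcoldef]
  have hRsq : ∀ j, (∑ i, R i j ^ 2) ≤ bb j ^ 2 := by
    intro j
    have h := hRcol j
    have h2 := Real.sq_sqrt (sum_sq_nn (fun i => R i j))
    nlinarith [Real.sqrt_nonneg (∑ i, R i j ^ 2)]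
  -- dH decomposition
  have hdHR : ∀ j, dH j = dR j + (2 * ρ * u j) * lam := by
    intro j
    rw [hdHdef, hdRdef, ← hlam]
    have h1 : ∀ i, H i j * z i = R i j * z i + (2 * ρ * u j) * z i ^ 2 := by
      intro i; rw [hHdef]; ring
    simp only [h1, Finset.sum_add_distrib, Finset.mul_sum]
  -- |dR| bound
  have hdRabs : ∀ j, |dR j| ≤ Real.sqrt lam * bb j := by
    intro j
    have h1 : dR j ^ 2 ≤ (∑ i, R i j ^ 2) * lam := by
      rw [hdRdef, ← hlam]
      exact csA _ _
    have h2 : (∑ i, R i j ^ 2) * lam ≤ bb j ^ 2 * lam :=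
      mul_le_mul_of_nonneg_right (hRsq j) (le_of_lt hlampos)
    have h3 : |dR j| = Real.sqrt (dR j ^ 2) := (Real.sqrt_sq_eq_abs _).symm
    rw [h3]
    calc Real.sqrt (dR j ^ 2) ≤ Real.sqrt (bb j ^ 2 * lam) :=
          Real.sqrt_le_sqrt (by linarith)
      _ = bb j * Real.sqrt lam := by
          rw [Real.sqrt_mul (sq_nonneg _), Real.sqrt_sq (hbbnn j)]
      _ = Real.sqrt lam * bb j := by ring
  -- lower bound on |dH|
  have hdHabs : ∀ j, Real.sqrt lam * (K - bb j) ≤ |dH j| := by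
    intro j
    have h1 : |2 * ρ * u j * lam| = 2 * ρ * |u j| * lam := by
      rw [abs_mul, abs_mul, abs_mul]
      rw [abs_of_pos hρpos, abs_of_pos hlampos]
      norm_num
    have h2 : |2 * ρ * u j * lam| ≤ |dH j| + |dR j| := by
      have e : 2 * ρ * u j * lam = dH j - dR j := by rw [hdHR]; ring
      rw [e]
      exact abs_sub _ _
    have h3 : 2 * ρ * μ * lam ≤ 2 * ρ * |u j| * lam :=
      mul_le_mul_of_nonneg_right
        (mul_le_mul_of_nonneg_left (hμle j) (by positivity : (0:ℝ) ≤ 2 * ρ))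
        (le_of_lt hlampos)
    have h4 := hdRabs j
    have h5 := hbbnn j
    -- √lam (K - bb j) ≤ K lam - √lam bb j ≤ |dH|
    have hK0 : 0 < K := by rw [hKdef]; positivity
    have hsllam : Real.sqrt lam ≤ lam := by nlinarith [hsl1, hslsq, hslnn]
    have h6 : Real.sqrt lam * (K - bb j) ≤ K * lam - Real.sqrt lam * bb j := by
      have hKl : K * Real.sqrt lam ≤ K * lam :=
        mul_le_mul_of_nonneg_left hsllam (le_of_lt hK0)
      nlinarith [hKl]
    rw [hKdef] at h6 ⊢
    nlinarith
  -- lower bound on column norms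
  have hNlow : ∀ j, (K - bb j) ^ 2 ≤ N j := by
    intro j
    have h1 : dH j ^ 2 ≤ N j * lam := by
      rw [hdHdef, hNdef, ← hlam]
      exact csA _ _
    have h2 : (Real.sqrt lam * (K - bb j)) ^ 2 ≤ dH j ^ 2 := by
      have h := hdHabs j
      have hnn : 0 ≤ Real.sqrt lam * (K - bb j) :=
        mul_nonneg hslnn (le_of_lt (hKbbpos j))
      nlinarith [abs_nonneg (dH j), sq_abs (dH j)]
    have h3 : (Real.sqrt lam * (K - bb j)) ^ 2 = lam * (K - bb j) ^ 2 := by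
      rw [mul_pow, Real.sq_sqrt (le_of_lt hlampos)]
    nlinarith
  have hNpos : ∀ j, 0 < N j := fun j =>
    lt_of_lt_of_le (pow_pos (hKbbpos j) 2) (hNlow j)
  have hNne : ∀ j, N j ≠ 0 := fun j => ne_of_gt (hNpos j)
  have hdHne : ∀ j, dH j ≠ 0 := by
    intro j h0
    have := hdHabs j
    rw [h0, abs_zero] at this
    nlinarith [hKbbpos j, hsl1]
  -- first conclusion: nonzero columns
  have hcol : ∀ j, ∃ i, Gmap gradf ρ L V0 u i j ≠ 0 := by
    intro j
    by_contra hcon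
    push_neg at hcon
    have hHz : ∀ i, H i j = 0 := by
      intro i
      have := hcon i
      rw [hGH i j] at this
      have hcne : c⁻¹ ≠ 0 := inv_ne_zero (ne_of_gt hcpos)
      exact (mul_eq_zero.1 this).resolve_left hcne
    have : N j = 0 := by rw [hNdef]; simp [hHz]
    exact hNne j this
  refine ⟨hcol, ?_⟩
  -- V1 entries
  set V1 := normalizeCols (Gmap gradf ρ L V0 u) with hV1def
  have hV1 : ∀ i j, V1 i j = H i j / Real.sqrt (N j) := by
    intro i j
    rw [hV1def]
    show Gmap gradf ρ L V0 u i j / Real.sqrt (∑ i', Gmap gradf ρ L V0 u i' j ^ 2) = _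
    have e1 : (∑ i', Gmap gradf ρ L V0 u i' j ^ 2) = c⁻¹ ^ 2 * N j := by
      rw [hNdef, Finset.mul_sum]
      exact Finset.sum_congr rfl fun i' _ => by rw [hGH]; ring
    rw [e1, hGH i j, Real.sqrt_mul (sq_nonneg _), Real.sqrt_sq (by positivity)]
    rw [mul_div_mul_left _ _ (inv_ne_zero (ne_of_gt hcpos))]
  have hV1sqcol : ∀ j, (∑ i, V1 i j ^ 2) = 1 := by
    intro j
    have e : ∀ i, V1 i j ^ 2 = H i j ^ 2 / N j := by
      intro i
      rw [hV1, div_pow, Real.sq_sqrt (le_of_lt (hNpos j))]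
    simp only [e]
    rw [← Finset.sum_div, ← hNdef, div_self (hNne j)]
  have hfrobV1 : frobSq V1 = p := by
    unfold frobSq
    rw [Finset.sum_comm]
    simp [hV1sqcol]
  -- τ and T
  obtain ⟨τ, hτdef⟩ : ∃ τ : Fin p → ℝ,
      ∀ j, τ j = dH j / (Real.sqrt lam * Real.sqrt (N j)) := ⟨_, fun _ => rfl⟩
  obtain ⟨T, hTdef⟩ : ∃ T : ℝ, T = ∑ j, τ j ^ 2 := ⟨_, rfl⟩
  have hτsq : ∀ j, τ j ^ 2 = dH j ^ 2 / (lam * N j) := by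
    intro j
    rw [hτdef, div_pow, mul_pow, Real.sq_sqrt (le_of_lt hlampos),
      Real.sq_sqrt (le_of_lt (hNpos j))]
  have hτpos : ∀ j, 0 < τ j ^ 2 := by
    intro j
    rw [hτsq]
    have h1 : 0 < dH j ^ 2 :=
      lt_of_le_of_ne (sq_nonneg _) (Ne.symm (pow_ne_zero 2 (hdHne j)))
    exact div_pos h1 (mul_pos hlampos (hNpos j))
  have hTpos : 0 < T := by
    rw [hTdef]
    exact Finset.sum_pos (fun j _ => hτpos j) Finset.univ_nonempty
  have hTne : T ≠ 0 := ne_of_gt hTpos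
  have hsTpos : 0 < Real.sqrt T := Real.sqrt_pos.2 hTpos
  -- per-column gap bound
  have h1mτ : ∀ j, 1 - τ j ^ 2 ≤ bb j ^ 2 / (K - ϖ) ^ 2 := by
    intro j
    have hq : dH j / lam = dR j / lam + 2 * ρ * u j := by
      rw [hdHR]; field_simp
    have hHR : ∀ i, H i j - (dH j / lam) * z i = R i j - (dR j / lam) * z i := by
      intro i
      rw [hHdef, hq]
      ring
    have e1 : (∑ i, (H i j - (dH j / lam) * z i) ^ 2) = N j - dH j ^ 2 / lam := by
      rw [sum_sub_mul_sq, hlam, ← hNdef, ← hdHdef]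
      field_simp
      ring
    have e2 : (∑ i, (R i j - (dR j / lam) * z i) ^ 2) = (∑ i, R i j ^ 2) - dR j ^ 2 / lam := by
      rw [sum_sub_mul_sq, hlam, ← hdRdef]
      field_simp
      ring
    have e3 : N j - dH j ^ 2 / lam = (∑ i, R i j ^ 2) - dR j ^ 2 / lam := by
      rw [← e1, ← e2]
      exact Finset.sum_congr rfl fun i _ => by rw [hHR]
    have e4 : N j - dH j ^ 2 / lam ≤ bb j ^ 2 := by
      have hd : 0 ≤ dR j ^ 2 / lam := by positivity
      have := hRsq j
      linarith [e3]
    have e5 : 1 - τ j ^ 2 = (N j - dH j ^ 2 / lam) / N j := by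
      rw [hτsq]
      field_simp [hlamne, hNne j]
    rw [e5]
    have hNge : (K - ϖ) ^ 2 ≤ N j := by
      have h1 : (K - ϖ) ^ 2 ≤ (K - bb j) ^ 2 :=
        pow_le_pow_left₀ (le_of_lt hKϖpos) (hKbb j) 2
      linarith [hNlow j]
    calc (N j - dH j ^ 2 / lam) / N j ≤ bb j ^ 2 / N j := by
          exact div_le_div_of_nonneg_right e4 (le_of_lt (hNpos j))
      _ ≤ bb j ^ 2 / (K - ϖ) ^ 2 :=
          div_le_div_of_nonneg_left (sq_nonneg _) (pow_pos hKϖpos 2) hNge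
  -- sum of bb² bound
  have hsumbb : (∑ j, bb j ^ 2) ≤ ϖ ^ 2 := by
    have hgsq : (∑ j, gcol j ^ 2) = frobSq (gradf V0) := by
      have e : ∀ j, gcol j ^ 2 = ∑ i, gradf V0 i j ^ 2 := by
        intro j; rw [hgcoldef, Real.sq_sqrt (sum_sq_nn _)]
      simp only [e]
      unfold frobSq
      rw [Finset.sum_comm]
    have hsumg : (∑ j, gcol j) ≤ Real.sqrt p * gF := by
      have h1 : (∑ j : Fin p, 1 * gcol j) ≤
          Real.sqrt (∑ j : Fin p, (1:ℝ) ^ 2) * Real.sqrt (∑ j, gcol j ^ 2) := csB _ _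
      have h2 : (∑ j : Fin p, (1:ℝ) ^ 2) = p := by simp
      have h3 : Real.sqrt (∑ j, gcol j ^ 2) = gF := by
        rw [hgsq, hgFdef, frobNorm]
      rw [h2, h3] at h1
      simpa using h1
    have hgF2 : gF ^ 2 = frobSq (gradf V0) := by
      rw [hgFdef, frobNorm, Real.sq_sqrt]
      unfold frobSq
      exact Finset.sum_nonneg fun i _ => sum_sq_nn _
    have hexp : (∑ j, bb j ^ 2) = p * L ^ 2 + 2 * L * (∑ j, gcol j) + ∑ j, gcol j ^ 2 := by
      have e : ∀ j, bb j ^ 2 = L ^ 2 + 2 * L * gcol j + gcol j ^ 2 := by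
        intro j; rw [hbbdef]; ring
      simp only [e, Finset.sum_add_distrib, Finset.sum_const, Finset.card_fin,
        nsmul_eq_mul, Finset.mul_sum]
    have hsp : Real.sqrt p ^ 2 = p := Real.sq_sqrt (by positivity)
    have hsumg2 : 2 * L * (∑ j, gcol j) ≤ 2 * L * (Real.sqrt p * gF) := by
      apply mul_le_mul_of_nonneg_left hsumg (by positivity)
    have hQ : (∑ j, gcol j ^ 2) = gF ^ 2 := by rw [hgsq, hgF2]
    have hstep : (∑ j, bb j ^ 2) ≤ (L * Real.sqrt p + gF) ^ 2 := by
      rw [hexp, hQ]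
      have hexp2 : (L * Real.sqrt p + gF) ^ 2
          = L ^ 2 * (Real.sqrt p ^ 2) + 2 * L * (Real.sqrt p * gF) + gF ^ 2 := by ring
      rw [hsp] at hexp2
      linarith [hsumg2]
    calc (∑ j, bb j ^ 2) ≤ (L * Real.sqrt p + gF) ^ 2 := hstep
      _ ≤ ϖ ^ 2 := pow_le_pow_left₀ (add_nonneg (by positivity) hgFnn) hgF 2
  -- spectral lower bound via test vector
  obtain ⟨x, hxdef⟩ : ∃ x : Fin p → ℝ, ∀ j, x j = τ j / Real.sqrt T := ⟨_, fun _ => rfl⟩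
  have hx1 : (∑ j, x j ^ 2) = 1 := by
    have e : ∀ j, x j ^ 2 = τ j ^ 2 / T := by
      intro j; rw [hxdef, div_pow, Real.sq_sqrt (le_of_lt hTpos)]
    simp only [e]
    rw [← Finset.sum_div, ← hTdef, div_self hTne]
  obtain ⟨w, hwdef⟩ : ∃ w : Fin m → ℝ, ∀ i, w i = z i / Real.sqrt lam := ⟨_, fun _ => rfl⟩
  have hw1 : (∑ i, w i ^ 2) = 1 := by
    have e : ∀ i, w i ^ 2 = z i ^ 2 / lam := by
      intro i; rw [hwdef, div_pow, Real.sq_sqrt (le_of_lt hlampos)]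
    simp only [e]
    rw [← Finset.sum_div, hlam, div_self hlamne]
  have hwV1 : ∀ j, (∑ i, w i * V1 i j) = τ j := by
    intro j
    have e : ∀ i, w i * V1 i j = (z i * H i j) / (Real.sqrt lam * Real.sqrt (N j)) := by
      intro i
      rw [hwdef, hV1, div_mul_div_comm]
    simp only [e]
    rw [← Finset.sum_div, hτdef, hdHdef]
    congr 1
    exact Finset.sum_congr rfl fun i _ => by ring
  have hwy : (∑ i, w i * (∑ j, V1 i j * x j)) = Real.sqrt T := by
    have e1 : (∑ i, w i * (∑ j, V1 i j * x j)) = ∑ j, x j * (∑ i, w i * V1 i j) := by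
      simp only [Finset.mul_sum]
      rw [Finset.sum_comm]
      exact Finset.sum_congr rfl fun j _ => Finset.sum_congr rfl fun i _ => by ring
    rw [e1]
    have e2 : ∀ j, x j * τ j = τ j ^ 2 / Real.sqrt T := by
      intro j; rw [hxdef]; ring
    calc (∑ j, x j * (∑ i, w i * V1 i j)) = ∑ j, τ j ^ 2 / Real.sqrt T := by
          exact Finset.sum_congr rfl fun j _ => by rw [hwV1, e2]
      _ = T / Real.sqrt T := by rw [← Finset.sum_div, ← hTdef]
      _ = Real.sqrt T := by
          rw [eq_comm, eq_div_iff (ne_of_gt hsTpos), Real.mul_self_sqrt (le_of_lt hTpos)]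
  have hTval : T ≤ ∑ i, (∑ j, V1 i j * x j) ^ 2 := by
    have h := csA w (fun i => ∑ j, V1 i j * x j)
    rw [hwy, hw1, one_mul, Real.sq_sqrt (le_of_lt hTpos)] at h
    exact h
  have hbddS : BddAbove {cc : ℝ | ∃ y : Fin p → ℝ, (∑ j, y j ^ 2) = 1 ∧
      cc = ∑ i, (∑ j, V1 i j * y j) ^ 2} := by
    refine ⟨p, ?_⟩
    rintro cc ⟨y, hy1, rfl⟩
    have h1 : ∀ i, (∑ j, V1 i j * y j) ^ 2 ≤ ∑ j, V1 i j ^ 2 := by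
      intro i
      have := csA (fun j => V1 i j) y
      rw [hy1, mul_one] at this
      exact this
    calc (∑ i, (∑ j, V1 i j * y j) ^ 2) ≤ ∑ i, ∑ j, V1 i j ^ 2 :=
          Finset.sum_le_sum fun i _ => h1 i
      _ = p := hfrobV1
  have hspec : T ≤ specSq V1 := by
    have hmem : (∑ i, (∑ j, V1 i j * x j) ^ 2) ∈ {cc : ℝ | ∃ y : Fin p → ℝ,
        (∑ j, y j ^ 2) = 1 ∧ cc = ∑ i, (∑ j, V1 i j * y j) ^ 2} := ⟨x, hx1, rfl⟩
    exact le_trans hTval (le_csSup hbddS hmem)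
  -- final assembly
  have hgap : (p:ℝ) - T ≤ c0 ^ 2 := by
    have h2 : (p:ℝ) - T = ∑ j, (1 - τ j ^ 2) := by
      rw [hTdef, Finset.sum_sub_distrib]
      simp
    have h3 : (∑ j, (1 - τ j ^ 2)) ≤ (∑ j, bb j ^ 2) / (K - ϖ) ^ 2 := by
      rw [Finset.sum_div]
      exact Finset.sum_le_sum fun j _ => h1mτ j
    have h5 : (∑ j, bb j ^ 2) / (K - ϖ) ^ 2 ≤ ϖ ^ 2 / (K - ϖ) ^ 2 :=
      div_le_div_of_nonneg_right hsumbb (by positivity)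
    have h6 : ϖ ^ 2 / (K - ϖ) ^ 2 ≤ c0 ^ 2 := by
      rw [div_le_iff₀ (pow_pos hKϖpos 2)]
      have hϖc0 : ϖ ≤ c0 * (K - ϖ) := by
        have h := (div_le_iff₀ hc0p).1 hKϖ2
        linarith only [h]
      have h7 := pow_le_pow_left₀ (le_of_lt hϖpos) hϖc0 2
      rw [mul_pow] at h7
      exact h7
    linarith only [h2, h3, h5, h6]
  linarith only [hspec, hfrobV1, hgap]


end
end

section
/- Let V ∈ ℝ^{m×p} have all columns of unit Euclidean norm and suppose ‖V‖_F² − ‖V‖² ≤ c₀² for some c₀ ∈ (0,1). Then any unit eigenvector u₁ of VᵀV associated with its largest eigenvalue satisfies |（u₁)_j| ≥ √(1 − c₀²)/‖V‖ > 0 for every index j ∈ {1,…,p}; in particular, since 1 ≤ ‖V‖ ≤ √p, every entry of u₁ satisfies |(u₁)_j| ≥ √(1 − c₀²)/√p > 0. -/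
open Matrix

noncomputable section

lemma psd_aux {m p : ℕ} (V : Matrix (Fin m) (Fin p) ℝ) (y : Fin p → ℝ) :
    y ⬝ᵥ ((Vᵀ * V) *ᵥ y) = (V *ᵥ y) ⬝ᵥ (V *ᵥ y) := by
  rw [← mulVec_mulVec, dotProduct_mulVec, vecMul_transpose]

lemma psd_nonneg {m p : ℕ} (V : Matrix (Fin m) (Fin p) ℝ) (y : Fin p → ℝ) :
    0 ≤ y ⬝ᵥ ((Vᵀ * V) *ᵥ y) := by
  rw [psd_aux]
  exact Finset.sum_nonneg fun i _ => mul_self_nonneg _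

lemma sym_aux {m p : ℕ} (V : Matrix (Fin m) (Fin p) ℝ) (u y : Fin p → ℝ) (lam : ℝ)
    (h : (Vᵀ * V) *ᵥ u = lam • u) :
    u ⬝ᵥ ((Vᵀ * V) *ᵥ y) = lam * (u ⬝ᵥ y) := by
  rw [dotProduct_mulVec, ← mulVec_transpose, transpose_mul, transpose_transpose, h,
    smul_dotProduct, smul_eq_mul]

/-- Rayleigh lower bound along `u`. -/
lemma rayleigh_lower {m p : ℕ} (V : Matrix (Fin m) (Fin p) ℝ) (lam : ℝ) (u : Fin p → ℝ)
    (hu : (∑ j, u j ^ 2) = 1) (heig : (Vᵀ * V) *ᵥ u = lam • u) (x : Fin p → ℝ) :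
    lam * (u ⬝ᵥ x) ^ 2 ≤ x ⬝ᵥ ((Vᵀ * V) *ᵥ x) := by
  set M := Vᵀ * V with hM
  have huu : u ⬝ᵥ u = 1 := by
    rw [dotProduct]; rw [← hu]; exact Finset.sum_congr rfl fun j _ => (sq (u j)).symm
  set α := u ⬝ᵥ x with hα
  set y := x - α • u with hy
  have hxy : x = y + α • u := by simp [hy]
  have huy : u ⬝ᵥ y = 0 := by
    simp [hy, dotProduct_sub, dotProduct_smul, huu, smul_eq_mul]
    exact sub_eq_zero.mpr hα.symm
  have hyu : y ⬝ᵥ u = 0 := by rw [dotProduct_comm]; exact huy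
  have hexp : x ⬝ᵥ (M *ᵥ x) = y ⬝ᵥ (M *ᵥ y) + α ^ 2 * lam := by
    rw [hxy]
    rw [mulVec_add, mulVec_smul, add_dotProduct, dotProduct_add, dotProduct_add,
      dotProduct_smul, smul_dotProduct, dotProduct_smul, smul_dotProduct]
    rw [heig]
    have h1 : u ⬝ᵥ (M *ᵥ y) = lam * (u ⬝ᵥ y) := sym_aux V u y lam heig
    simp [h1, huy, hyu, smul_eq_mul, dotProduct_smul, huu]
    ring
  rw [hexp]
  have := psd_nonneg V y
  rw [← hM] at this
  nlinarith [this]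

lemma one_sub_sq_pos {c0 : ℝ} (hc0 : c0 ∈ Set.Ioo (0 : ℝ) 1) : 0 < 1 - c0 ^ 2 := by
  nlinarith [hc0.1, hc0.2]

/-- If `V` has unit columns and `‖V‖_F² − ‖V‖² ≤ c₀²` with `c₀ ∈ (0,1)`, then
any unit eigenvector `u₁` of `VᵀV` for its largest eigenvalue has entries bounded below in
magnitude by `√(1−c₀²)/‖V‖ > 0`, hence by `√(1−c₀²)/√p > 0`. -/
theorem top_eigenvector_entries_bounded_below (m p : ℕ) (hp : 0 < p)
    (V : Matrix (Fin m) (Fin p) ℝ) (hV : unitCols V)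
    (c0 : ℝ) (hc0 : c0 ∈ Set.Ioo (0 : ℝ) 1) (hgap : frobSq V - specSq V ≤ c0 ^ 2)
    (lam : ℝ) (u : Fin p → ℝ) (htop : isTopEigen V lam u) :
    (0 < Real.sqrt (1 - c0 ^ 2) / Real.sqrt p) ∧
    ∀ j, Real.sqrt (1 - c0 ^ 2) / specNorm V ≤ |u j| ∧
      Real.sqrt (1 - c0 ^ 2) / Real.sqrt p ≤ |u j| ∧ 0 < |u j| := by
  obtain ⟨hu, heig, hray⟩ := htop
  have hc2 : 0 < 1 - c0 ^ 2 := one_sub_sq_pos hc0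
  -- diagonal entries of VᵀV are 1
  have hdiag : ∀ k : Fin p, (Vᵀ * V) k k = 1 := by
    intro k
    have : (Vᵀ * V) k k = ∑ i, V i k * V i k := by
      simp [Matrix.mul_apply, transpose_apply]
    rw [this, ← hV k]
    exact Finset.sum_congr rfl fun i _ => (sq (V i k)).symm
  -- per-entry inequality: lam * u k ^ 2 ≤ 1
  have hone : ∀ k : Fin p, lam * u k ^ 2 ≤ 1 := by
    intro k
    have h := rayleigh_lower V lam u hu heig (Pi.single k 1)
    have h1 : (Pi.single k 1 : Fin p → ℝ) ⬝ᵥ ((Vᵀ * V) *ᵥ Pi.single k 1) = 1 := by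
      simp [mulVec_single, single_dotProduct, hdiag k]
    have h2 : u ⬝ᵥ (Pi.single k 1 : Fin p → ℝ) = u k := by simp
    rw [h1, h2] at h
    exact h
  -- frobSq V = p
  have hfrob : frobSq V = p := by
    rw [frobSq, Finset.sum_comm]
    rw [Finset.sum_congr rfl fun j (_ : j ∈ Finset.univ) => hV j]
    simp
  -- specSq V = lam
  have hmem : lam ∈ {c | ∃ x : Fin p → ℝ, (∑ j, x j ^ 2) = 1 ∧ c = ∑ i, (∑ j, V i j * x j) ^ 2} := by
    refine ⟨u, hu, ?_⟩
    have : (∑ i, (∑ j, V i j * u j) ^ 2) = u ⬝ᵥ ((Vᵀ * V) *ᵥ u) := by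
      rw [psd_aux]
      simp [dotProduct, mulVec, sq]
    rw [this, heig, dotProduct_smul, smul_eq_mul]
    have huu : u ⬝ᵥ u = 1 := by
      rw [dotProduct, ← hu]; exact Finset.sum_congr rfl fun j _ => (sq (u j)).symm
    rw [huu, mul_one]
  have hbdd : ∀ c ∈ {c | ∃ x : Fin p → ℝ, (∑ j, x j ^ 2) = 1 ∧ c = ∑ i, (∑ j, V i j * x j) ^ 2},
      c ≤ lam := by
    rintro c ⟨x, hx, rfl⟩
    have h1 : (∑ i, (∑ j, V i j * x j) ^ 2) = x ⬝ᵥ ((Vᵀ * V) *ᵥ x) := by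
      rw [psd_aux]; simp [dotProduct, mulVec, sq]
    have hxx : x ⬝ᵥ x = 1 := by
      rw [dotProduct, ← hx]; exact Finset.sum_congr rfl fun j _ => (sq (x j)).symm
    rw [h1]
    calc x ⬝ᵥ ((Vᵀ * V) *ᵥ x) ≤ lam * (x ⬝ᵥ x) := hray x
      _ = lam := by rw [hxx, mul_one]
  have hspec : specSq V = lam := by
    refine le_antisymm (csSup_le ⟨lam, hmem⟩ hbdd) (le_csSup ⟨lam, hbdd⟩ hmem)
  -- gap: p - lam ≤ c0^2
  have hgap' : (p : ℝ) - lam ≤ c0 ^ 2 := by rw [← hfrob, ← hspec]; exact hgap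
  -- key entry bound
  have hkey : ∀ j : Fin p, 1 - c0 ^ 2 ≤ lam * u j ^ 2 := by
    intro j
    have hsum : (p : ℝ) - lam = ∑ k, (1 - lam * u k ^ 2) := by
      rw [Finset.sum_sub_distrib, ← Finset.mul_sum, hu]
      simp
    have hterm : 1 - lam * u j ^ 2 ≤ ∑ k, (1 - lam * u k ^ 2) :=
      Finset.single_le_sum (f := fun k => 1 - lam * u k ^ 2)
        (fun k _ => by simpa using sub_nonneg.mpr (hone k)) (Finset.mem_univ j)
    linarith [hgap', hterm, hsum.symm.le, hsum.le]
  have hlam_pos : 0 < lam := by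
    have h := hkey ⟨0, hp⟩
    nlinarith [sq_nonneg (u ⟨0, hp⟩)]
  have hlam_le_p : lam ≤ p := by
    have hsum : (p : ℝ) - lam = ∑ k, (1 - lam * u k ^ 2) := by
      rw [Finset.sum_sub_distrib, ← Finset.mul_sum, hu]
      simp
    have : 0 ≤ ∑ k, (1 - lam * u k ^ 2) :=
      Finset.sum_nonneg fun k _ => by linarith [hone k]
    linarith
  have hsqrtp : 0 < Real.sqrt p := Real.sqrt_pos.mpr (by exact_mod_cast hp)
  have hsqrtlam : 0 < Real.sqrt lam := Real.sqrt_pos.mpr hlam_pos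
  have hsqrtc : 0 < Real.sqrt (1 - c0 ^ 2) := Real.sqrt_pos.mpr hc2
  refine ⟨div_pos hsqrtc hsqrtp, fun j => ?_⟩
  have hj : (1 - c0 ^ 2) / lam ≤ u j ^ 2 := by
    rw [div_le_iff₀ hlam_pos]
    linarith [hkey j]
  have habs : Real.sqrt (1 - c0 ^ 2) / Real.sqrt lam ≤ |u j| := by
    have := Real.sqrt_le_sqrt hj
    rwa [Real.sqrt_div hc2.le, Real.sqrt_sq_eq_abs] at this
  have hspecn : specNorm V = Real.sqrt lam := by rw [specNorm, hspec]
  have h2 : Real.sqrt (1 - c0 ^ 2) / Real.sqrt p ≤ Real.sqrt (1 - c0 ^ 2) / Real.sqrt lam := by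
    apply div_le_div_of_nonneg_left hsqrtc.le hsqrtlam
    exact Real.sqrt_le_sqrt hlam_le_p
  exact ⟨hspecn ▸ habs, le_trans h2 habs, lt_of_lt_of_le (div_pos hsqrtc hsqrtlam) habs⟩

end
end

section
/- Let p ≥ 1 and let u ∈ ℝ^p be a unit vector (‖u‖₂ = 1) such that |u_j| ≥ a for all j, where a ∈ [0,1]. Then the ℓ₁-norm of u satisfies Σ_{j=1}^p |u_j| ≥ a + 1 − 1/p. -/
open Matrix

noncomputable section

/-- If `u ∈ ℝ^p` is a unit vector whose entries all satisfy `|u_j| ≥ a` with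
`a ∈ [0,1]`, then `Σ_j |u_j| ≥ a + 1 − 1/p`. -/
theorem l1_lower_bound_of_unit_vector (p : ℕ) (hp : 1 ≤ p) (u : Fin p → ℝ)
    (hunit : ∑ j, u j ^ 2 = 1) (a : ℝ) (ha : a ∈ Set.Icc (0 : ℝ) 1)
    (hlb : ∀ j, a ≤ |u j|) :
    a + 1 - 1 / (p : ℝ) ≤ ∑ j, |u j| := by
  have hpe : Nonempty (Fin p) := ⟨⟨0, hp⟩⟩
  obtain ⟨j0, -, hj0⟩ := Finset.exists_min_image Finset.univ (fun j => u j ^ 2)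
    ⟨Classical.arbitrary (Fin p), Finset.mem_univ _⟩
  have hpos : (0:ℝ) < p := by exact_mod_cast hp
  -- u j0 ^ 2 ≤ 1/p
  have hmin : (p : ℝ) * u j0 ^ 2 ≤ 1 := by
    calc (p : ℝ) * u j0 ^ 2 = ∑ _j : Fin p, u j0 ^ 2 := by simp [mul_comm]
    _ ≤ ∑ j, u j ^ 2 := Finset.sum_le_sum (fun j _ => hj0 j (Finset.mem_univ j))
    _ = 1 := hunit
  have hj0le : u j0 ^ 2 ≤ 1 / p := by
    rw [le_div_iff₀ hpos]; linarith [hmin]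
  -- each |u j| ≤ 1 hence u j ^2 ≤ |u j|
  have hsq : ∀ j, u j ^ 2 ≤ |u j| := by
    intro j
    have h1 : u j ^ 2 ≤ 1 := by
      calc u j ^ 2 ≤ ∑ j, u j ^ 2 :=
        Finset.single_le_sum (fun i _ => sq_nonneg (u i)) (Finset.mem_univ j)
      _ = 1 := hunit
    nlinarith [abs_nonneg (u j), sq_abs (u j)]
  have hsplit : ∑ j, |u j| = |u j0| + ∑ j ∈ Finset.univ.erase j0, |u j| := by
    exact (Finset.add_sum_erase _ _ (Finset.mem_univ j0)).symm
  have hsplit2 : ∑ j ∈ Finset.univ.erase j0, u j ^ 2 = 1 - u j0 ^ 2 := by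
    have := Finset.add_sum_erase Finset.univ (fun j => u j ^ 2) (Finset.mem_univ j0)
    rw [hunit] at this; linarith
  have hrest : ∑ j ∈ Finset.univ.erase j0, u j ^ 2 ≤ ∑ j ∈ Finset.univ.erase j0, |u j| :=
    Finset.sum_le_sum (fun j _ => hsq j)
  have := hlb j0
  rw [hsplit]
  rw [hsplit2] at hrest
  linarith


end
end

section
/- (Theorem 2, approximate feasibility of the rank-one projection.) Let V ∈ ℝ^{m×p} have all columns of unit Euclidean norm and suppose ‖V‖_F² − ‖V‖² ≤ ε for some ε > 0. Let P₁ be a unit eigenvector of VᵀV associated with its largest eigenvalue and set x := ‖V‖·P₁ ∈ ℝ^p. Then ‖x ∘ x − e‖₂ ≤ ε, i.e., (Σ_{j=1}^p (x_j² − 1)²)^{1/2} ≤ ε, where ∘ denotes the entrywise (Hadamard) product and e the all-ones vector. -/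
open Matrix

noncomputable section

/-- Theorem 2, approximate feasibility. If `V` has unit columns and
`‖V‖_F² − ‖V‖² ≤ ε`, then the rank-one projection `x = ‖V‖·P₁` (with `P₁` a unit top
eigenvector of `VᵀV`) satisfies `‖x ∘ x − e‖₂ ≤ ε`. -/
theorem rank_one_projection_approx_feasible (m p : ℕ)
    (V : Matrix (Fin m) (Fin p) ℝ) (hV : unitCols V)
    (ε : ℝ) (hε : 0 < ε) (hgap : frobSq V - specSq V ≤ ε)
    (lam : ℝ) (P1 : Fin p → ℝ) (htop : isTopEigen V lam P1)
    (x : Fin p → ℝ) (hx : x = specNorm V • P1) :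
    Real.sqrt (∑ j, (x j ^ 2 - 1) ^ 2) ≤ ε := by
  classical
  obtain ⟨hP1, heig, hray⟩ := htop
  set A := Vᵀ * V with hA
  have hPdot : P1 ⬝ᵥ P1 = 1 := by
    simpa [dotProduct, sq] using hP1
  have hsym : Aᵀ = A := by rw [hA, transpose_mul, transpose_transpose]
  have hApos : ∀ y : Fin p → ℝ, 0 ≤ y ⬝ᵥ (A *ᵥ y) := by
    intro y
    rw [hA, ← mulVec_mulVec, dotProduct_mulVec, vecMul_transpose]
    exact Finset.sum_nonneg fun i _ => mul_self_nonneg _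
  have hvm : P1 ᵥ* A = lam • P1 := by
    rw [← hsym, vecMul_transpose, heig]
  have hPy : ∀ y : Fin p → ℝ, P1 ⬝ᵥ (A *ᵥ y) = lam * (P1 ⬝ᵥ y) := by
    intro y
    rw [dotProduct_mulVec, hvm, smul_dotProduct, smul_eq_mul]
  have key : ∀ y : Fin p → ℝ, lam * (P1 ⬝ᵥ y) ^ 2 ≤ y ⬝ᵥ (A *ᵥ y) := by
    intro y
    have h0 := hApos (y - (P1 ⬝ᵥ y) • P1)
    have expand : (y - (P1 ⬝ᵥ y) • P1) ⬝ᵥ (A *ᵥ (y - (P1 ⬝ᵥ y) • P1))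
        = y ⬝ᵥ (A *ᵥ y) - lam * (P1 ⬝ᵥ y) ^ 2 := by
      rw [mulVec_sub, mulVec_smul, heig]
      simp only [dotProduct_sub, sub_dotProduct, dotProduct_smul, smul_dotProduct,
        smul_eq_mul, hPy, dotProduct_comm y P1, hPdot]
      ring
    linarith [h0, expand.ge, expand.le]
  have hdiag : ∀ j, lam * (P1 j) ^ 2 ≤ 1 := by
    intro j
    have h := key (Pi.single j 1)
    have h1 : P1 ⬝ᵥ Pi.single j 1 = P1 j := by simp
    have h2 : (Pi.single j 1 : Fin p → ℝ) ⬝ᵥ (A *ᵥ Pi.single j 1) = A j j := by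
      simp [mulVec_single, dotProduct, Pi.single_apply]
    have h3 : A j j = 1 := by
      rw [hA]
      have : (Vᵀ * V) j j = ∑ i, V i j * V i j := by
        simp [Matrix.mul_apply, transpose_apply]
      rw [this]
      simpa [sq] using hV j
    rw [h1, h2, h3] at h
    exact h
  have hlamP1 : P1 ⬝ᵥ (A *ᵥ P1) = lam := by
    rw [hPy, hPdot, mul_one]
  have hlam_nonneg : 0 ≤ lam := hlamP1 ▸ hApos P1
  have hval : ∀ y : Fin p → ℝ, (∑ i, (∑ j, V i j * y j) ^ 2) = y ⬝ᵥ (A *ᵥ y) := by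
    intro y
    rw [hA, ← mulVec_mulVec, dotProduct_mulVec, vecMul_transpose]
    simp [dotProduct, mulVec, sq]
  have hspec : specSq V = lam := by
    unfold specSq
    apply le_antisymm
    · apply csSup_le
      · exact ⟨lam, P1, hP1, (hval P1 ▸ hlamP1.symm : _)⟩
      · rintro c ⟨y, hy1, rfl⟩
        rw [hval y]
        calc y ⬝ᵥ (A *ᵥ y) ≤ lam * (y ⬝ᵥ y) := hray y
          _ = lam := by
            have : y ⬝ᵥ y = 1 := by simpa [dotProduct, sq] using hy1
            rw [this, mul_one]
    · apply le_csSup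
      · refine ⟨lam, ?_⟩
        rintro c ⟨y, hy1, rfl⟩
        rw [hval y]
        calc y ⬝ᵥ (A *ᵥ y) ≤ lam * (y ⬝ᵥ y) := hray y
          _ = lam := by
            have : y ⬝ᵥ y = 1 := by simpa [dotProduct, sq] using hy1
            rw [this, mul_one]
      · exact ⟨P1, hP1, (hval P1 ▸ hlamP1.symm : _)⟩
  have hfrob : frobSq V = p := by
    unfold frobSq
    rw [Finset.sum_comm, Finset.sum_congr rfl fun j _ => hV j,
      Finset.sum_const, Finset.card_univ, Fintype.card_fin, nsmul_eq_mul, mul_one]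
  have hsum : ∑ j, (1 - lam * (P1 j) ^ 2) = p - lam := by
    rw [Finset.sum_sub_distrib, ← Finset.mul_sum, hP1, mul_one,
      Finset.sum_const, Finset.card_univ, Fintype.card_fin, nsmul_eq_mul, mul_one]
  have hεsum : ∑ j, (1 - lam * (P1 j) ^ 2) ≤ ε := by
    rw [hsum]
    rw [hfrob, hspec] at hgap
    linarith
  have hxval : ∀ j, (x j ^ 2 - 1) ^ 2 = (1 - lam * (P1 j) ^ 2) ^ 2 := by
    intro j
    rw [hx]
    have : (specNorm V) ^ 2 = lam := by
      rw [specNorm, Real.sq_sqrt (hspec ▸ hlam_nonneg), hspec]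
    simp only [Pi.smul_apply, smul_eq_mul, mul_pow, this]
    ring
  have hnn : ∀ j ∈ Finset.univ, (0:ℝ) ≤ 1 - lam * (P1 j) ^ 2 := fun j _ => by
    linarith [hdiag j]
  have hsq : ∑ j, (1 - lam * (P1 j) ^ 2) ^ 2 ≤ (∑ j, (1 - lam * (P1 j) ^ 2)) ^ 2 :=
    Finset.sum_sq_le_sq_sum_of_nonneg hnn
  calc Real.sqrt (∑ j, (x j ^ 2 - 1) ^ 2)
      = Real.sqrt (∑ j, (1 - lam * (P1 j) ^ 2) ^ 2) := by
        congr 1; exact Finset.sum_congr rfl fun j _ => hxval j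
    _ ≤ Real.sqrt ((∑ j, (1 - lam * (P1 j) ^ 2)) ^ 2) := Real.sqrt_le_sqrt hsq
    _ = ∑ j, (1 - lam * (P1 j) ^ 2) := Real.sqrt_sq (Finset.sum_nonneg hnn)
    _ ≤ ε := hεsum

end
end
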